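/- Let φ be an LRV formula containing no subformula of the form ⟨x ≉ y? ψ⟩, and such that no test subformula ψ occurring in an obligation ⟨x ≈ y? ψ⟩ of φ itself contains an obligation. Fix pairwise distinct fresh variables k and v_{y,ψ} (for each variable y of φ and test ψ of φ), all not occurring in φ. Let const = G((k ≈ X k ∨ ¬X⊤) ∧ ⋀_{x ∈ vars(φ)} k ≉ x); for each y, ψ let val_{y,ψ} = G(v_{y,ψ} ≈ k ∨ v_{y,ψ} ≈ y) ∧ G(v_{y,ψ} ≈ y ⇔ ψ); and let φ^⊤ be the result of replacing in φ every occurrence of ⟨x ≈ y? ψ⟩ by ⟨x ≈ v_{y,ψ}? ⊤⟩. Then φ is satisfiable if and only if φ' = φ^⊤ ∧ const ∧ ⋀_{y,ψ} val_{y,ψ} is satisfiable; moreover in φ' every obligation has test ⊤. -/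

import Mathlib

/-- Syntax of LRV formulas.  Variables are natural numbers.
`eqX x j y` is the atomic formula `x ≈ X^j y`,
`futEq x y φ` is the future obligation `⟨x ≈ y? φ⟩`,
`futNeq x y φ` is `⟨x ≉ y? φ⟩`;
`untl` is "until" (U), `prev` is `X⁻¹`, `sinc` is "since" (S). -/
inductive LRV : Type
  | eqX : ℕ → ℕ → ℕ → LRV
  | futEq : ℕ → ℕ → LRV → LRV
  | futNeq : ℕ → ℕ → LRV → LRV
  | and : LRV → LRV → LRV
  | not : LRV → LRV
  | next : LRV → LRV
  | untl : LRV → LRV → LRV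
  | prev : LRV → LRV
  | sinc : LRV → LRV → LRV
  deriving DecidableEq

/-- A model is a finite (intended: non-empty) sequence of valuations. -/
abbrev LRVModel := List (ℕ → ℕ)

/-- The valuation of a model at position `i`. -/
def mval (σ : LRVModel) (i : ℕ) : ℕ → ℕ := σ.getD i (fun _ => 0)

/-- Satisfaction relation `σ, i ⊨ φ` for LRV over finite models. -/
def LRVSat (σ : LRVModel) : LRV → ℕ → Prop
  | .eqX x j y, i => i + j < σ.length ∧ mval σ i x = mval σ (i + j) y
  | .futEq x y φ, i => ∃ j, i < j ∧ j < σ.length ∧ mval σ i x = mval σ j y ∧ LRVSat σ φ j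
  | .futNeq x y φ, i => ∃ j, i < j ∧ j < σ.length ∧ mval σ i x ≠ mval σ j y ∧ LRVSat σ φ j
  | .and φ ψ, i => LRVSat σ φ i ∧ LRVSat σ ψ i
  | .not φ, i => ¬ LRVSat σ φ i
  | .next φ, i => i + 1 < σ.length ∧ LRVSat σ φ (i + 1)
  | .untl φ ψ, i => ∃ j, i ≤ j ∧ j < σ.length ∧ LRVSat σ ψ j ∧ ∀ l, i ≤ l → l < j → LRVSat σ φ l
  | .prev φ, i => 0 < i ∧ LRVSat σ φ (i - 1)
  | .sinc φ ψ, i => ∃ j, j ≤ i ∧ LRVSat σ ψ j ∧ ∀ l, j < l → l ≤ i → LRVSat σ φ l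

/-- Satisfiability: truth at position 0 in some non-empty model. -/
def LRVSatisfiable (φ : LRV) : Prop := ∃ σ : LRVModel, σ ≠ [] ∧ LRVSat σ φ 0

/-- ⊤ (true at every position of a model). -/
def LRV.top : LRV := .eqX 0 0 0

/-- Disjunction (derived). -/
def LRV.lor (φ ψ : LRV) : LRV := .not (.and (.not φ) (.not ψ))

/-- Implication (derived). -/
def LRV.limp (φ ψ : LRV) : LRV := LRV.lor (.not φ) ψ

/-- Bi-implication (derived). -/
def LRV.liff (φ ψ : LRV) : LRV := .and (LRV.limp φ ψ) (LRV.limp ψ φ)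

/-- F (eventually, at the current or a later position). -/
def LRV.evF (φ : LRV) : LRV := .untl LRV.top φ

/-- G (always, from the current position on). -/
def LRV.alG (φ : LRV) : LRV := .not (LRV.evF (.not φ))

/-- Iterated next `X^n`. -/
def LRV.nextn : ℕ → LRV → LRV
  | 0, φ => φ
  | n + 1, φ => .next (LRV.nextn n φ)

/-- Iterated previous `(X⁻¹)^n`. -/
def LRV.prevn : ℕ → LRV → LRV
  | 0, φ => φ
  | n + 1, φ => .prev (LRV.prevn n φ)

/-- `x ≉ X^j y`, i.e. `¬(x ≈ X^j y) ∧ X^j ⊤`. -/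
def LRV.neqX (x j y : ℕ) : LRV := .and (.not (.eqX x j y)) (LRV.nextn j LRV.top)

/-- Finite conjunction. -/
def lrvBigAnd (l : List LRV) : LRV := l.foldr .and LRV.top

/-- Finite disjunction. -/
def lrvBigOr (l : List LRV) : LRV := l.foldr LRV.lor (.not LRV.top)

/-- The finite set of variables occurring in a formula. -/
def LRV.vars : LRV → Finset ℕ
  | .eqX x _ y => {x, y}
  | .futEq x y ψ => insert x (insert y ψ.vars)
  | .futNeq x y ψ => insert x (insert y ψ.vars)
  | .and a b => a.vars ∪ b.vars
  | .not a => a.vars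
  | .next a => a.vars
  | .untl a b => a.vars ∪ b.vars
  | .prev a => a.vars
  | .sinc a b => a.vars ∪ b.vars

/-- The list of all subformulas of a formula (including itself, and including
subformulas occurring inside the tests of obligations). -/
def LRV.subfs : LRV → List LRV
  | .eqX x j y => [.eqX x j y]
  | .futEq x y ψ => .futEq x y ψ :: ψ.subfs
  | .futNeq x y ψ => .futNeq x y ψ :: ψ.subfs
  | .and a b => .and a b :: (a.subfs ++ b.subfs)
  | .not a => .not a :: a.subfs
  | .next a => .next a :: a.subfs
  | .untl a b => .untl a b :: (a.subfs ++ b.subfs)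
  | .prev a => .prev a :: a.subfs
  | .sinc a b => .sinc a b :: (a.subfs ++ b.subfs)

/-- The tests of a formula: all ψ such that `⟨x ≈ y? ψ⟩` or `⟨x ≉ y? ψ⟩` occurs in it. -/
def LRV.tests : LRV → List LRV
  | .eqX _ _ _ => []
  | .futEq _ _ ψ => ψ :: ψ.tests
  | .futNeq _ _ ψ => ψ :: ψ.tests
  | .and a b => a.tests ++ b.tests
  | .not a => a.tests
  | .next a => a.tests
  | .untl a b => a.tests ++ b.tests
  | .prev a => a.tests
  | .sinc a b => a.tests ++ b.tests

/-- A formula contains no obligations `⟨· ≈ ·? ·⟩` or `⟨· ≉ ·? ·⟩`. -/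
def LRV.obligFree : LRV → Prop
  | .eqX _ _ _ => True
  | .futEq _ _ _ => False
  | .futNeq _ _ _ => False
  | .and a b => a.obligFree ∧ b.obligFree
  | .not a => a.obligFree
  | .next a => a.obligFree
  | .untl a b => a.obligFree ∧ b.obligFree
  | .prev a => a.obligFree
  | .sinc a b => a.obligFree ∧ b.obligFree

/-- A formula contains no subformula of the form `⟨· ≉ ·? ·⟩`. -/
def LRV.futNeqFree : LRV → Prop
  | .eqX _ _ _ => True
  | .futEq _ _ ψ => ψ.futNeqFree
  | .futNeq _ _ _ => False
  | .and a b => a.futNeqFree ∧ b.futNeqFree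
  | .not a => a.futNeqFree
  | .next a => a.futNeqFree
  | .untl a b => a.futNeqFree ∧ b.futNeqFree
  | .prev a => a.futNeqFree
  | .sinc a b => a.futNeqFree ∧ b.futNeqFree

/-- Every obligation occurring in the formula has test `⊤`. -/
def LRV.obligTop : LRV → Prop
  | .eqX _ _ _ => True
  | .futEq _ _ ψ => ψ = LRV.top
  | .futNeq _ _ ψ => ψ = LRV.top
  | .and a b => a.obligTop ∧ b.obligTop
  | .not a => a.obligTop
  | .next a => a.obligTop
  | .untl a b => a.obligTop ∧ b.obligTop
  | .prev a => a.obligTop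
  | .sinc a b => a.obligTop ∧ b.obligTop

/-- `const = G((k ≈ X k ∨ ¬X⊤) ∧ ⋀_{x ∈ vars(φ)} k ≉ x)`:
the variable `k` acts as a constant different from all variables of φ. -/
noncomputable def constF (k : ℕ) (φ : LRV) : LRV :=
  LRV.alG (.and
    (LRV.lor (.eqX k 1 k) (.not (.next LRV.top)))
    (lrvBigAnd ((φ.vars.sort (· ≤ ·)).map (fun x => LRV.neqX k 0 x))))

/-- `val_{y,ψ} = G(v_{y,ψ} ≈ k ∨ v_{y,ψ} ≈ y) ∧ G(v_{y,ψ} ≈ y ⇔ ψ)`. -/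
def valTop (k : ℕ) (v : ℕ → LRV → ℕ) (y : ℕ) (ψ : LRV) : LRV :=
  .and (LRV.alG (LRV.lor (.eqX (v y ψ) 0 k) (.eqX (v y ψ) 0 y)))
       (LRV.alG (LRV.liff (.eqX (v y ψ) 0 y) ψ))

/-- `φ^⊤`: replace every occurrence of `⟨x ≈ y? ψ⟩` by `⟨x ≈ v_{y,ψ}? ⊤⟩`. -/
def trTop (v : ℕ → LRV → ℕ) : LRV → LRV
  | .eqX x j y => .eqX x j y
  | .futEq x y ψ => .futEq x (v y ψ) LRV.top
  | .futNeq x y ψ => .futNeq x y ψ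
  | .and a b => .and (trTop v a) (trTop v b)
  | .not a => .not (trTop v a)
  | .next a => .next (trTop v a)
  | .untl a b => .untl (trTop v a) (trTop v b)
  | .prev a => .prev (trTop v a)
  | .sinc a b => .sinc (trTop v a) (trTop v b)

/-- The full translation `φ' = φ^⊤ ∧ const ∧ ⋀_{y,ψ} val_{y,ψ}`,
where `y` ranges over the variables of φ and `ψ` over the tests of φ. -/
noncomputable def trTopFull (k : ℕ) (v : ℕ → LRV → ℕ) (φ : LRV) : LRV :=
  .and (trTop v φ)
    (.and (constF k φ)
      (lrvBigAnd ((φ.vars.sort (· ≤ ·)).flatMap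
        (fun y => φ.tests.dedup.map (fun ψ => valTop k v y ψ)))))

section Aux

open Classical

lemma sat_top {σ : LRVModel} {i : ℕ} : LRVSat σ LRV.top i ↔ i < σ.length := by
  simp [LRVSat, LRV.top]

lemma sat_lor {σ : LRVModel} {a b : LRV} {i : ℕ} :
    LRVSat σ (LRV.lor a b) i ↔ LRVSat σ a i ∨ LRVSat σ b i := by
  simp only [LRV.lor, LRVSat]; tauto

lemma sat_limp {σ : LRVModel} {a b : LRV} {i : ℕ} :
    LRVSat σ (LRV.limp a b) i ↔ (LRVSat σ a i → LRVSat σ b i) := by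
  simp only [LRV.limp, sat_lor, LRVSat]; tauto

lemma sat_liff {σ : LRVModel} {a b : LRV} {i : ℕ} :
    LRVSat σ (LRV.liff a b) i ↔ (LRVSat σ a i ↔ LRVSat σ b i) := by
  simp only [LRV.liff, LRVSat, sat_limp]; tauto

lemma sat_alG {σ : LRVModel} {a : LRV} {i : ℕ} :
    LRVSat σ (LRV.alG a) i ↔ ∀ j, i ≤ j → j < σ.length → LRVSat σ a j := by
  simp only [LRV.alG, LRV.evF, LRVSat]
  constructor
  · intro h j hij hj
    by_contra hna
    exact h ⟨j, hij, hj, hna, fun l _ hl => sat_top.mpr (hl.trans hj)⟩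
  · rintro h ⟨j, hij, hj, hna, -⟩
    exact hna (h j hij hj)

lemma sat_bigAnd {σ : LRVModel} {l : List LRV} {i : ℕ} :
    LRVSat σ (lrvBigAnd l) i ↔ i < σ.length ∧ ∀ ψ ∈ l, LRVSat σ ψ i := by
  induction l with
  | nil => simpa [lrvBigAnd] using sat_top
  | cons a l ih =>
    simp only [lrvBigAnd] at ih ⊢
    constructor
    · rintro ⟨ha, hl⟩
      obtain ⟨hi, hall⟩ := ih.mp hl
      refine ⟨hi, ?_⟩
      intro ψ hψ
      rcases List.mem_cons.mp hψ with rfl | hψ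
      · exact ha
      · exact hall ψ hψ
    · rintro ⟨hi, hall⟩
      exact ⟨hall a (List.mem_cons_self),
        ih.mpr ⟨hi, fun ψ hψ => hall ψ (List.mem_cons_of_mem a hψ)⟩⟩

lemma sat_neqX0 {σ : LRVModel} {x y : ℕ} {i : ℕ} :
    LRVSat σ (LRV.neqX x 0 y) i ↔ i < σ.length ∧ mval σ i x ≠ mval σ i y := by
  constructor
  · rintro ⟨h1, h2⟩
    have hi : i < σ.length := sat_top.mp h2
    exact ⟨hi, fun he => h1 ⟨hi, he⟩⟩
  · rintro ⟨hi, hne⟩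
    exact ⟨fun he => hne he.2, sat_top.mpr hi⟩

end Aux
section Aux2

lemma tests_vars_subset : ∀ φ : LRV, ∀ ψ ∈ φ.tests, ψ.vars ⊆ φ.vars := by
  intro φ
  induction φ with
  | eqX x j y => simp [LRV.tests]
  | futEq x y ψ ih =>
    intro t ht
    simp only [LRV.tests, List.mem_cons] at ht
    rcases ht with rfl | ht
    · exact (Finset.subset_insert y t.vars).trans (Finset.subset_insert x _)
    · exact (ih t ht).trans ((Finset.subset_insert y ψ.vars).trans (Finset.subset_insert x _))
  | futNeq x y ψ ih =>
    intro t ht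
    simp only [LRV.tests, List.mem_cons] at ht
    rcases ht with rfl | ht
    · exact (Finset.subset_insert y t.vars).trans (Finset.subset_insert x _)
    · exact (ih t ht).trans ((Finset.subset_insert y ψ.vars).trans (Finset.subset_insert x _))
  | and a b iha ihb =>
    intro t ht
    simp only [LRV.tests, List.mem_append] at ht
    rcases ht with ht | ht
    · exact (iha t ht).trans Finset.subset_union_left
    · exact (ihb t ht).trans Finset.subset_union_right
  | not a ih => exact ih
  | next a ih => exact ih
  | untl a b iha ihb =>
    intro t ht
    simp only [LRV.tests, List.mem_append] at ht
    rcases ht with ht | ht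
    · exact (iha t ht).trans Finset.subset_union_left
    · exact (ihb t ht).trans Finset.subset_union_right
  | prev a ih => exact ih
  | sinc a b iha ihb =>
    intro t ht
    simp only [LRV.tests, List.mem_append] at ht
    rcases ht with ht | ht
    · exact (iha t ht).trans Finset.subset_union_left
    · exact (ihb t ht).trans Finset.subset_union_right

lemma obligTop_of_obligFree : ∀ φ : LRV, φ.obligFree → φ.obligTop := by
  intro φ
  induction φ with
  | eqX x j y => intro; trivial
  | futEq x y ψ ih => intro h; exact h.elim
  | futNeq x y ψ ih => intro h; exact h.elim
  | and a b iha ihb => rintro ⟨h1, h2⟩; exact ⟨iha h1, ihb h2⟩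
  | not a ih => exact ih
  | next a ih => exact ih
  | untl a b iha ihb => rintro ⟨h1, h2⟩; exact ⟨iha h1, ihb h2⟩
  | prev a ih => exact ih
  | sinc a b iha ihb => rintro ⟨h1, h2⟩; exact ⟨iha h1, ihb h2⟩

lemma obligTop_trTop (v : ℕ → LRV → ℕ) : ∀ φ : LRV, φ.futNeqFree → (trTop v φ).obligTop := by
  intro φ
  induction φ with
  | eqX x j y => intro; trivial
  | futEq x y ψ ih => intro; rfl
  | futNeq x y ψ ih => exact fun h => h.elim
  | and a b iha ihb => rintro ⟨h1, h2⟩; exact ⟨iha h1, ihb h2⟩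
  | not a ih => exact ih
  | next a ih => exact ih
  | untl a b iha ihb => rintro ⟨h1, h2⟩; exact ⟨iha h1, ihb h2⟩
  | prev a ih => exact ih
  | sinc a b iha ihb => rintro ⟨h1, h2⟩; exact ⟨iha h1, ihb h2⟩

lemma obligTop_top : LRV.top.obligTop := trivial

lemma obligTop_bigAnd {l : List LRV} (h : ∀ ψ ∈ l, ψ.obligTop) : (lrvBigAnd l).obligTop := by
  induction l with
  | nil => exact obligTop_top
  | cons a l ih =>
    exact ⟨h a (List.mem_cons_self), ih fun ψ hψ => h ψ (List.mem_cons_of_mem a hψ)⟩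

lemma obligTop_lor {a b : LRV} (ha : a.obligTop) (hb : b.obligTop) : (LRV.lor a b).obligTop :=
  ⟨ha, hb⟩

lemma obligTop_alG {a : LRV} (ha : a.obligTop) : (LRV.alG a).obligTop :=
  ⟨trivial, ha⟩

lemma obligTop_constF (k : ℕ) (φ : LRV) : (constF k φ).obligTop := by
  refine obligTop_alG ⟨obligTop_lor trivial trivial, obligTop_bigAnd ?_⟩
  intro ψ hψ
  simp only [List.mem_map] at hψ
  obtain ⟨x, -, rfl⟩ := hψ
  exact ⟨trivial, trivial⟩

lemma obligTop_valTop {k : ℕ} {v : ℕ → LRV → ℕ} {y : ℕ} {ψ : LRV} (h : ψ.obligTop) :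
    (valTop k v y ψ).obligTop :=
  ⟨⟨trivial, trivial, trivial⟩, trivial, ⟨trivial, h⟩, h, trivial⟩

end Aux2
section Aux3

lemma sat_congr : ∀ χ : LRV, ∀ σ σ' : LRVModel, σ.length = σ'.length →
    (∀ i x, x ∈ χ.vars → mval σ i x = mval σ' i x) →
    ∀ i, (LRVSat σ χ i ↔ LRVSat σ' χ i) := by
  intro χ
  induction χ with
  | eqX x j y =>
    intro σ σ' hlen hm i
    simp only [LRVSat, hlen, hm i x (by simp [LRV.vars]), hm (i + j) y (by simp [LRV.vars])]
  | futEq x y ψ ih =>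
    intro σ σ' hlen hm i
    have hψ : ∀ i, LRVSat σ ψ i ↔ LRVSat σ' ψ i :=
      ih σ σ' hlen fun i z hz => hm i z (by simp [LRV.vars, hz])
    simp only [LRVSat, hlen, hm _ x (by simp [LRV.vars])]
    refine exists_congr fun j => ?_
    rw [hm j y (by simp [LRV.vars]), hψ j]
  | futNeq x y ψ ih =>
    intro σ σ' hlen hm i
    have hψ : ∀ i, LRVSat σ ψ i ↔ LRVSat σ' ψ i :=
      ih σ σ' hlen fun i z hz => hm i z (by simp [LRV.vars, hz])
    simp only [LRVSat, hlen, hm _ x (by simp [LRV.vars])]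
    refine exists_congr fun j => ?_
    rw [hm j y (by simp [LRV.vars]), hψ j]
  | and a b iha ihb =>
    intro σ σ' hlen hm i
    simp only [LRVSat,
      iha σ σ' hlen (fun i z hz => hm i z (by simp [LRV.vars, hz])) i,
      ihb σ σ' hlen (fun i z hz => hm i z (by simp [LRV.vars, hz])) i]
  | not a ih =>
    intro σ σ' hlen hm i
    simp only [LRVSat, ih σ σ' hlen hm i]
  | next a ih =>
    intro σ σ' hlen hm i
    simp only [LRVSat, hlen, ih σ σ' hlen hm (i + 1)]
  | untl a b iha ihb =>
    intro σ σ' hlen hm i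
    have ha := iha σ σ' hlen (fun i z hz => hm i z (by simp [LRV.vars, hz]))
    have hb := ihb σ σ' hlen (fun i z hz => hm i z (by simp [LRV.vars, hz]))
    simp only [LRVSat, hlen]
    exact exists_congr fun j => and_congr_right fun _ => and_congr_right fun _ =>
      and_congr (hb j) (forall_congr' fun l => by rw [ha l])
  | prev a ih =>
    intro σ σ' hlen hm i
    simp only [LRVSat, ih σ σ' hlen hm (i - 1)]
  | sinc a b iha ihb =>
    intro σ σ' hlen hm i
    have ha := iha σ σ' hlen (fun i z hz => hm i z (by simp [LRV.vars, hz]))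
    have hb := ihb σ σ' hlen (fun i z hz => hm i z (by simp [LRV.vars, hz]))
    simp only [LRVSat]
    exact exists_congr fun j => and_congr_right fun _ =>
      and_congr (hb j) (forall_congr' fun l => by rw [ha l])

lemma sat_constF {σ : LRVModel} {k : ℕ} {φ : LRV} :
    LRVSat σ (constF k φ) 0 ↔ ∀ i < σ.length,
      (i + 1 < σ.length → mval σ i k = mval σ (i + 1) k) ∧
      ∀ x ∈ φ.vars, mval σ i k ≠ mval σ i x := by
  rw [constF, sat_alG]
  constructor
  · intro h i hi
    obtain ⟨hA, hB⟩ := h i (Nat.zero_le i) hi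
    constructor
    · intro hi1
      rcases sat_lor.mp hA with h1 | h2
      · exact h1.2
      · exact absurd (show LRVSat σ (.next LRV.top) i from ⟨hi1, sat_top.mpr hi1⟩) h2
    · intro x hx
      have := (sat_bigAnd.mp hB).2 (LRV.neqX k 0 x)
        (List.mem_map.mpr ⟨x, (Finset.mem_sort _).mpr hx, rfl⟩)
      exact (sat_neqX0.mp this).2
  · intro h j _ hj
    refine ⟨sat_lor.mpr ?_, sat_bigAnd.mpr ⟨hj, ?_⟩⟩
    · by_cases hj1 : j + 1 < σ.length
      · exact Or.inl ⟨hj1, (h j hj).1 hj1⟩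
      · refine Or.inr ?_
        intro hcon
        obtain ⟨hc, -⟩ := hcon
        exact hj1 hc
    · intro ψ hψ
      obtain ⟨x, hx, rfl⟩ := List.mem_map.mp hψ
      exact sat_neqX0.mpr ⟨hj, (h j hj).2 x ((Finset.mem_sort _).mp hx)⟩

lemma sat_valTop {σ : LRVModel} {k : ℕ} {v : ℕ → LRV → ℕ} {y : ℕ} {ψ : LRV} :
    LRVSat σ (valTop k v y ψ) 0 ↔ ∀ i < σ.length,
      (mval σ i (v y ψ) = mval σ i k ∨ mval σ i (v y ψ) = mval σ i y) ∧
      (mval σ i (v y ψ) = mval σ i y ↔ LRVSat σ ψ i) := by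
  constructor
  · intro h
    obtain ⟨h1, h2⟩ := h
    rw [sat_alG] at h1 h2
    intro i hi
    constructor
    · rcases sat_lor.mp (h1 i (Nat.zero_le i) hi) with ⟨-, he⟩ | ⟨-, he⟩
      · exact Or.inl he
      · exact Or.inr he
    · have hiff := sat_liff.mp (h2 i (Nat.zero_le i) hi)
      constructor
      · intro he
        exact hiff.mp ⟨hi, he⟩
      · intro hψi
        obtain ⟨-, he⟩ := hiff.mpr hψi
        exact he
  · intro h
    constructor
    · rw [sat_alG]
      intro j _ hj
      rcases (h j hj).1 with he | he
      · exact sat_lor.mpr (Or.inl ⟨hj, he⟩)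
      · exact sat_lor.mpr (Or.inr ⟨hj, he⟩)
    · rw [sat_alG]
      intro j _ hj
      refine sat_liff.mpr ⟨?_, ?_⟩
      · rintro ⟨-, he⟩
        exact (h j hj).2.mp he
      · intro hψj
        exact ⟨hj, (h j hj).2.mpr hψj⟩

lemma valTop_mem {φ : LRV} {k : ℕ} {v : ℕ → LRV → ℕ} {y : ℕ} {ψ : LRV}
    (hy : y ∈ φ.vars) (hψ : ψ ∈ φ.tests) :
    valTop k v y ψ ∈ (φ.vars.sort (· ≤ ·)).flatMap
      (fun y => φ.tests.dedup.map (fun ψ => valTop k v y ψ)) :=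
  List.mem_flatMap.mpr ⟨y, (Finset.mem_sort _).mpr hy,
    List.mem_map.mpr ⟨ψ, List.mem_dedup.mpr hψ, rfl⟩⟩

lemma key (σ : LRVModel) (k : ℕ) (v : ℕ → LRV → ℕ) (C : ℕ) (S : Finset ℕ) (T : List LRV)
    (hKne : ∀ i < σ.length, ∀ x ∈ S, mval σ i x ≠ C)
    (hval : ∀ y ∈ S, ∀ ψ ∈ T, ∀ i < σ.length,
      (mval σ i (v y ψ) = C ∨ mval σ i (v y ψ) = mval σ i y) ∧
      (mval σ i (v y ψ) = mval σ i y ↔ LRVSat σ ψ i)) :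
    ∀ χ : LRV, χ.vars ⊆ S → (∀ t ∈ χ.tests, t ∈ T) → χ.futNeqFree →
      ∀ i, (LRVSat σ (trTop v χ) i ↔ LRVSat σ χ i) := by
  intro χ
  induction χ with
  | eqX x j y => exact fun _ _ _ i => Iff.rfl
  | futEq x y ψ ih =>
    intro hS hT _ i
    have hy : y ∈ S := hS (by simp [LRV.vars])
    have hx : x ∈ S := hS (by simp [LRV.vars])
    have hψT : ψ ∈ T := hT ψ (by simp [LRV.tests])
    simp only [trTop, LRVSat]
    constructor
    · rintro ⟨j, hij, hj, heq, -⟩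
      have hi : i < σ.length := lt_trans hij hj
      have h1 := hval y hy ψ hψT j hj
      rcases h1.1 with hC | hy'
      · exact absurd (heq.trans hC) (hKne i hi x hx)
      · exact ⟨j, hij, hj, heq.trans hy', h1.2.mp hy'⟩
    · rintro ⟨j, hij, hj, heq, hψj⟩
      have h1 := hval y hy ψ hψT j hj
      exact ⟨j, hij, hj, heq.trans (h1.2.mpr hψj).symm, sat_top.mpr hj⟩
  | futNeq x y ψ ih => exact fun _ _ h => h.elim
  | and a b iha ihb =>
    intro hS hT hF i
    have hSa : a.vars ⊆ S := (Finset.subset_union_left).trans hS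
    have hSb : b.vars ⊆ S := (Finset.subset_union_right).trans hS
    simp only [trTop, LRVSat,
      iha hSa (fun t ht => hT t (List.mem_append_left _ ht)) hF.1 i,
      ihb hSb (fun t ht => hT t (List.mem_append_right _ ht)) hF.2 i]
  | not a ih =>
    intro hS hT hF i
    simp only [trTop, LRVSat, ih hS hT hF i]
  | next a ih =>
    intro hS hT hF i
    simp only [trTop, LRVSat, ih hS hT hF (i + 1)]
  | untl a b iha ihb =>
    intro hS hT hF i
    have ha := iha ((Finset.subset_union_left).trans hS)
      (fun t ht => hT t (List.mem_append_left _ ht)) hF.1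
    have hb := ihb ((Finset.subset_union_right).trans hS)
      (fun t ht => hT t (List.mem_append_right _ ht)) hF.2
    simp only [trTop, LRVSat]
    exact exists_congr fun j => and_congr_right fun _ => and_congr_right fun _ =>
      and_congr (hb j) (forall_congr' fun l => by rw [ha l])
  | prev a ih =>
    intro hS hT hF i
    simp only [trTop, LRVSat, ih hS hT hF (i - 1)]
  | sinc a b iha ihb =>
    intro hS hT hF i
    have ha := iha ((Finset.subset_union_left).trans hS)
      (fun t ht => hT t (List.mem_append_left _ ht)) hF.1
    have hb := ihb ((Finset.subset_union_right).trans hS)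
      (fun t ht => hT t (List.mem_append_right _ ht)) hF.2
    simp only [trTop, LRVSat]
    exact exists_congr fun j => and_congr_right fun _ =>
      and_congr (hb j) (forall_congr' fun l => by rw [ha l])

end Aux3
section Aux4

lemma mval_map_range (g : ℕ → (ℕ → ℕ)) {i n : ℕ} (h : i < n) :
    mval ((List.range n).map g) i = g i := by
  rw [mval, List.getD_eq_getElem?_getD]
  simp [List.getElem?_map, List.getElem?_range h]

lemma mval_of_le {σ : LRVModel} {i : ℕ} (h : σ.length ≤ i) : mval σ i = fun _ => 0 := by
  rw [mval, List.getD_eq_getElem?_getD, List.getElem?_eq_none h]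
  rfl

end Aux4
/-- Let φ be an LRV formula with no `⟨· ≉ ·? ·⟩` subformula whose tests contain
no obligations, and let `k` and the `v_{y,ψ}` be pairwise distinct fresh variables.  Then φ is
satisfiable iff `φ' = φ^⊤ ∧ const ∧ ⋀_{y,ψ} val_{y,ψ}` is satisfiable; moreover every obligation
of φ' has test ⊤. -/
theorem lrv_elimination_of_tests (φ : LRV) (k : ℕ) (v : ℕ → LRV → ℕ)
    (hNoNeq : φ.futNeqFree)
    (hTests : ∀ ψ ∈ φ.tests, ψ.obligFree)
    (hk : k ∉ φ.vars)
    (hv : ∀ y ∈ φ.vars, ∀ ψ ∈ φ.tests, v y ψ ∉ φ.vars ∧ v y ψ ≠ k)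
    (hvinj : ∀ y ∈ φ.vars, ∀ ψ ∈ φ.tests, ∀ y' ∈ φ.vars, ∀ ψ' ∈ φ.tests,
      v y ψ = v y' ψ' → y = y' ∧ ψ = ψ') :
    (LRVSatisfiable φ ↔ LRVSatisfiable (trTopFull k v φ)) ∧
      (trTopFull k v φ).obligTop := by
  classical
  constructor
  · constructor
    · -- (⇒) direction
      rintro ⟨σ, hne, hsat⟩
      have hlen0 : 0 < σ.length := List.length_pos_iff.mpr hne
      set C := (Finset.range σ.length ×ˢ φ.vars).sup (fun p => mval σ p.1 p.2) + 1 with hCdef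
      have hC : ∀ i < σ.length, ∀ x ∈ φ.vars, mval σ i x ≠ C := by
        intro i hi x hx heq
        have hle := Finset.le_sup (f := fun p : ℕ × ℕ => mval σ p.1 p.2) (b := (i, x))
          (Finset.mem_product.mpr ⟨Finset.mem_range.mpr hi, hx⟩)
        simp only at hle
        omega
      set g : ℕ → (ℕ → ℕ) := fun i x =>
        if x = k then C
        else if h : ∃ p : ℕ × LRV, p.1 ∈ φ.vars ∧ p.2 ∈ φ.tests ∧ x = v p.1 p.2 then
          (if LRVSat σ h.choose.2 i then mval σ i h.choose.1 else C)
        else mval σ i x with hg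
      set σ' : LRVModel := (List.range σ.length).map g with hσ'
      have hlen : σ'.length = σ.length := by simp [hσ']
      have hmv : ∀ i < σ.length, mval σ' i = g i := fun i hi => mval_map_range g hi
      have hgvar : ∀ i x, x ∈ φ.vars → g i x = mval σ i x := by
        intro i x hx
        have hxk : x ≠ k := fun h => hk (h ▸ hx)
        simp only [hg]
        rw [if_neg hxk, dif_neg]
        rintro ⟨p, hp1, hp2, hxe⟩
        exact (hv p.1 hp1 p.2 hp2).1 (hxe ▸ hx)
      have hgk : ∀ i, g i k = C := by
        intro i
        simp [hg]
      have hgv : ∀ y ∈ φ.vars, ∀ ψ ∈ φ.tests, ∀ i,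
          g i (v y ψ) = if LRVSat σ ψ i then mval σ i y else C := by
        intro y hy ψ hψ i
        simp only [hg]
        rw [if_neg (hv y hy ψ hψ).2]
        have hex : ∃ p : ℕ × LRV, p.1 ∈ φ.vars ∧ p.2 ∈ φ.tests ∧ v y ψ = v p.1 p.2 :=
          ⟨(y, ψ), hy, hψ, rfl⟩
        rw [dif_pos hex]
        obtain ⟨h1, h2, h3⟩ := hex.choose_spec
        obtain ⟨e1, e2⟩ := hvinj y hy ψ hψ hex.choose.1 h1 hex.choose.2 h2 h3
        rw [← e1, ← e2]
      have hmvals : ∀ i x, x ∈ φ.vars → mval σ' i x = mval σ i x := by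
        intro i x hx
        by_cases hi : i < σ.length
        · rw [hmv i hi, hgvar i x hx]
        · rw [mval_of_le (not_lt.mp (hlen ▸ hi)), mval_of_le (not_lt.mp hi)]
      have hcongr : ∀ χ : LRV, χ.vars ⊆ φ.vars → ∀ i, (LRVSat σ χ i ↔ LRVSat σ' χ i) :=
        fun χ hsub => sat_congr χ σ σ' hlen.symm
          (fun i x hx => (hmvals i x (hsub hx)).symm)
      have hKσ' : ∀ i < σ.length, mval σ' i k = C := fun i hi => by rw [hmv i hi, hgk]
      have hconst' : LRVSat σ' (constF k φ) 0 := by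
        refine sat_constF.mpr ?_
        intro i hi
        rw [hlen] at hi
        constructor
        · intro hi1
          rw [hlen] at hi1
          rw [hKσ' i hi, hKσ' (i + 1) hi1]
        · intro x hx heq
          rw [hKσ' i hi, hmvals i x hx] at heq
          exact hC i hi x hx heq.symm
      have hvals' : ∀ y ∈ φ.vars, ∀ ψ ∈ φ.tests, LRVSat σ' (valTop k v y ψ) 0 := by
        intro y hy ψ hψ
        have hψiff := hcongr ψ (tests_vars_subset φ ψ hψ)
        refine sat_valTop.mpr ?_
        intro i hi
        rw [hlen] at hi
        have hvv : mval σ' i (v y ψ) = if LRVSat σ ψ i then mval σ i y else C := by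
          rw [hmv i hi, hgv y hy ψ hψ i]
        by_cases hs : LRVSat σ ψ i
        · rw [hvv, if_pos hs]
          refine ⟨Or.inr (hmvals i y hy).symm, ?_⟩
          exact ⟨fun _ => (hψiff i).mp hs, fun _ => (hmvals i y hy).symm⟩
        · rw [hvv, if_neg hs]
          refine ⟨Or.inl (hKσ' i hi).symm, ?_, ?_⟩
          · intro he
            exact absurd (he.trans (hmvals i y hy)).symm (hC i hi y hy)
          · intro hs'
            exact absurd ((hψiff i).mpr hs') hs
      have hKne' : ∀ i < σ'.length, ∀ x ∈ φ.vars, mval σ' i x ≠ C := by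
        intro i hi x hx
        rw [hlen] at hi
        rw [hmvals i x hx]
        exact hC i hi x hx
      have hval' : ∀ y ∈ φ.vars, ∀ ψ ∈ φ.tests, ∀ i < σ'.length,
          (mval σ' i (v y ψ) = C ∨ mval σ' i (v y ψ) = mval σ' i y) ∧
          (mval σ' i (v y ψ) = mval σ' i y ↔ LRVSat σ' ψ i) := by
        intro y hy ψ hψ i hi
        have h' := sat_valTop.mp (hvals' y hy ψ hψ) i hi
        refine ⟨?_, h'.2⟩
        rcases h'.1 with h | h
        · exact Or.inl (h.trans (hKσ' i (hlen ▸ hi)))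
        · exact Or.inr h
      have hkey := key σ' k v C φ.vars φ.tests hKne' hval' φ (subset_refl _)
        (fun t ht => ht) hNoNeq 0
      refine ⟨σ', ?_, ?_⟩
      · intro hnil
        rw [hnil] at hlen
        simp at hlen
        omega
      · refine ⟨hkey.mpr ((hcongr φ (subset_refl _) 0).mp hsat), hconst',
          sat_bigAnd.mpr ⟨hlen ▸ hlen0, ?_⟩⟩
        intro ψ hψ
        obtain ⟨y, hy, hψ'⟩ := List.mem_flatMap.mp hψ
        obtain ⟨t, ht, rfl⟩ := List.mem_map.mp hψ'
        exact hvals' y ((Finset.mem_sort _).mp hy) t (List.mem_dedup.mp ht)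
    · -- (⇐) direction
      rintro ⟨σ, hne, hsat⟩
      obtain ⟨h1, h2, h3⟩ := hsat
      have hconst := sat_constF.mp h2
      have hK : ∀ i < σ.length, mval σ i k = mval σ 0 k := by
        intro i
        induction i with
        | zero => intro _; rfl
        | succ n ih =>
          intro hn1
          have hn : n < σ.length := Nat.lt_of_succ_lt hn1
          rw [← (hconst n hn).1 hn1, ih hn]
      have hKne : ∀ i < σ.length, ∀ x ∈ φ.vars, mval σ i x ≠ mval σ 0 k := by
        intro i hi x hx heq
        exact (hconst i hi).2 x hx ((hK i hi).trans heq.symm)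
      have hval : ∀ y ∈ φ.vars, ∀ ψ ∈ φ.tests, ∀ i < σ.length,
          (mval σ i (v y ψ) = mval σ 0 k ∨ mval σ i (v y ψ) = mval σ i y) ∧
          (mval σ i (v y ψ) = mval σ i y ↔ LRVSat σ ψ i) := by
        intro y hy ψ hψ i hi
        have h' := sat_valTop.mp ((sat_bigAnd.mp h3).2 _ (valTop_mem hy hψ)) i hi
        refine ⟨?_, h'.2⟩
        rcases h'.1 with h | h
        · exact Or.inl (h.trans (hK i hi))
        · exact Or.inr h
      have hkey := key σ k v (mval σ 0 k) φ.vars φ.tests hKne hval φ (subset_refl _)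
        (fun t ht => ht) hNoNeq 0
      exact ⟨σ, hne, hkey.mp h1⟩
  · -- obligTop
    refine ⟨obligTop_trTop v φ hNoNeq, obligTop_constF k φ, obligTop_bigAnd ?_⟩
    intro ψ hψ
    obtain ⟨y, hy, hψ'⟩ := List.mem_flatMap.mp hψ
    obtain ⟨t, ht, rfl⟩ := List.mem_map.mp hψ'
    exact obligTop_valTop (obligTop_of_obligFree t (hTests t (List.mem_dedup.mp ht)))
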